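/- In B_4, if β', β'', β''' are strongly quasipositive braids (possibly trivial), then the braid σ_{1,3}^{−1} σ_{2,4} β' σ_{1,2} β'' σ_{3,4} β''' is quasipositive, and the braid σ_{1,3}^{−1} σ_{2,4} β' σ_{1,4} β'' σ_{3,4} β''' is quasipositive. -/

import Mathlib

/-- Relations for the braid group `Bₙ`: the generator `k : Fin (n-1)` represents `σ_{k+1}`,
and we impose `σ_i σ_j = σ_j σ_i` for `|i - j| > 1` and `σ_i σ_{i+1} σ_i = σ_{i+1} σ_i σ_{i+1}`. -/
def braidRels (n : ℕ) : Set (FreeGroup (Fin (n - 1))) :=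
  {r | ∃ i j : Fin (n - 1), (i : ℕ) + 1 < (j : ℕ) ∧
      r = FreeGroup.of i * FreeGroup.of j * (FreeGroup.of i)⁻¹ * (FreeGroup.of j)⁻¹} ∪
  {r | ∃ i j : Fin (n - 1), (j : ℕ) = (i : ℕ) + 1 ∧
      r = FreeGroup.of i * FreeGroup.of j * FreeGroup.of i *
          (FreeGroup.of j * FreeGroup.of i * FreeGroup.of j)⁻¹}

/-- The braid group on `n` strands, presented with generators `σ_1, …, σ_{n-1}`. -/
abbrev BraidGroup (n : ℕ) : Type := PresentedGroup (braidRels n)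

/-- The standard generator `σ_i` of `Bₙ`, for `1 ≤ i ≤ n - 1` (junk value `1` otherwise). -/
def sigma (n i : ℕ) : BraidGroup n :=
  if h : 1 ≤ i ∧ i ≤ n - 1 then PresentedGroup.of ⟨i - 1, by omega⟩ else 1

/-- The word `σ_{j-1} σ_{j-2} ⋯ σ_{i+1}`. -/
def bandConj (n i j : ℕ) : BraidGroup n :=
  ((List.range (j - 1 - i)).map fun t => sigma n (j - 1 - t)).prod

/-- The band generator `σ_{i,j} = (σ_{j-1} σ_{j-2} ⋯ σ_{i+1}) σ_i (σ_{j-1} σ_{j-2} ⋯ σ_{i+1})⁻¹`.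
In particular `σ_{i,i+1} = σ_i`. -/
def band (n i j : ℕ) : BraidGroup n :=
  bandConj n i j * sigma n i * (bandConj n i j)⁻¹

/-- The set of band generators `σ_{i,j}`, `1 ≤ i < j ≤ n`, of `Bₙ`. -/
def bandGens (n : ℕ) : Set (BraidGroup n) :=
  {x | ∃ i j : ℕ, 1 ≤ i ∧ i < j ∧ j ≤ n ∧ x = band n i j}

/-- A braid is strongly quasipositive if it is a product of band generators, i.e. lies in the
submonoid generated by the `σ_{i,j}`, `1 ≤ i < j ≤ n`. -/
def StronglyQuasipositive (n : ℕ) (x : BraidGroup n) : Prop :=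
  x ∈ Submonoid.closure (bandGens n)

/-- A braid is quasipositive if it lies in the submonoid generated by all conjugates
`α σ_k α⁻¹` of the standard generators. -/
def Quasipositive (n : ℕ) (x : BraidGroup n) : Prop :=
  x ∈ Submonoid.closure
    {x : BraidGroup n | ∃ (α : BraidGroup n) (k : ℕ), 1 ≤ k ∧ k ≤ n - 1 ∧ x = α * sigma n k * α⁻¹}

section Aux

open Submonoid

lemma braid_rel_eq_one {n : ℕ} {r : FreeGroup (Fin (n - 1))} (h : r ∈ braidRels n) :
    PresentedGroup.mk (braidRels n) r = 1 :=
  (QuotientGroup.eq_one_iff r).mpr (Subgroup.subset_normalClosure h)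

lemma sigma_eq (n i : ℕ) (h1 : 1 ≤ i) (h2 : i ≤ n - 1) :
    sigma n i = PresentedGroup.of ⟨i - 1, by omega⟩ := by
  rw [sigma, dif_pos ⟨h1, h2⟩]

lemma comm13 : sigma 4 1 * sigma 4 3 = sigma 4 3 * sigma 4 1 := by
  have h := braid_rel_eq_one (n := 4)
    (Or.inl ⟨(⟨0, by omega⟩ : Fin 3), ⟨2, by omega⟩, by norm_num, rfl⟩)
  have h' : (PresentedGroup.of ⟨0, by omega⟩ : BraidGroup 4) * PresentedGroup.of ⟨2, by omega⟩ *
      (PresentedGroup.of ⟨0, by omega⟩)⁻¹ * (PresentedGroup.of ⟨2, by omega⟩)⁻¹ = 1 := by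
    simpa [PresentedGroup.of, map_mul, map_inv] using h
  rw [sigma_eq 4 1 (by norm_num) (by norm_num), sigma_eq 4 3 (by norm_num) (by norm_num)]
  exact mul_inv_eq_one.mp (by rw [mul_inv_rev]; simpa [mul_assoc] using h')

lemma band13 : band 4 1 3 = sigma 4 2 * sigma 4 1 * (sigma 4 2)⁻¹ := by
  norm_num [band, bandConj, List.range_succ]

lemma band24 : band 4 2 4 = sigma 4 3 * sigma 4 2 * (sigma 4 3)⁻¹ := by
  norm_num [band, bandConj, List.range_succ]

lemma band12 : band 4 1 2 = sigma 4 1 := by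
  norm_num [band, bandConj]

lemma band34 : band 4 3 4 = sigma 4 3 := by
  norm_num [band, bandConj]

lemma band14 : band 4 1 4 =
    (sigma 4 3 * sigma 4 2) * sigma 4 1 * (sigma 4 3 * sigma 4 2)⁻¹ := by
  norm_num [band, bandConj, List.range_succ]

/-- The generating set of quasipositive braids. -/
def qpGens (n : ℕ) : Set (BraidGroup n) :=
  {x : BraidGroup n | ∃ (α : BraidGroup n) (k : ℕ), 1 ≤ k ∧ k ≤ n - 1 ∧ x = α * sigma n k * α⁻¹}

lemma quasipositive_def (n : ℕ) (x : BraidGroup n) :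
    Quasipositive n x ↔ x ∈ Submonoid.closure (qpGens n) := Iff.rfl

lemma sqp_qp {n : ℕ} {x : BraidGroup n} (h : StronglyQuasipositive n x) :
    Quasipositive n x := by
  refine Submonoid.closure_mono ?_ h
  rintro _ ⟨i, j, h1, hij, hjn, rfl⟩
  exact ⟨bandConj n i j, i, h1, by omega, rfl⟩

lemma qp_conj {n : ℕ} (g : BraidGroup n) {x : BraidGroup n} (h : Quasipositive n x) :
    Quasipositive n (g * x * g⁻¹) := by
  induction h using Submonoid.closure_induction with
  | mem y hy =>
    obtain ⟨α, k, hk1, hk2, rfl⟩ := hy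
    exact Submonoid.subset_closure ⟨g * α, k, hk1, hk2, by group⟩
  | one => simpa [Quasipositive] using Submonoid.one_mem _
  | mul y z _ _ hy hz =>
    have : g * (y * z) * g⁻¹ = (g * y * g⁻¹) * (g * z * g⁻¹) := by group
    rw [this]
    exact Submonoid.mul_mem _ hy hz

lemma key1 : (band 4 1 3)⁻¹ * band 4 2 4 * band 4 1 2 * band 4 3 4 =
    ((sigma 4 2 * (sigma 4 1)⁻¹ * (sigma 4 2)⁻¹) * sigma 4 3 *
      (sigma 4 2 * (sigma 4 1)⁻¹ * (sigma 4 2)⁻¹)⁻¹) * sigma 4 2 := by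
  rw [band13, band24, band12, band34]
  rw [mul_assoc ((sigma 4 2 * sigma 4 1 * (sigma 4 2)⁻¹)⁻¹ * (sigma 4 3 * sigma 4 2 * (sigma 4 3)⁻¹))
    (sigma 4 1) (sigma 4 3), comm13]
  group

lemma key2 : (band 4 1 3)⁻¹ * band 4 2 4 * band 4 1 4 * band 4 3 4 =
    ((sigma 4 2 * (sigma 4 1)⁻¹ * (sigma 4 2)⁻¹) * sigma 4 3 *
      (sigma 4 2 * (sigma 4 1)⁻¹ * (sigma 4 2)⁻¹)⁻¹) *
    ((sigma 4 2 * (sigma 4 1)⁻¹) * sigma 4 2 * (sigma 4 2 * (sigma 4 1)⁻¹)⁻¹) := by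
  rw [band13, band24, band14, band34]
  group

lemma qp_key1 : Quasipositive 4 ((band 4 1 3)⁻¹ * band 4 2 4 * band 4 1 2 * band 4 3 4) := by
  rw [quasipositive_def, key1]
  exact Submonoid.mul_mem _
    (Submonoid.subset_closure ⟨_, 3, by norm_num, by norm_num, rfl⟩)
    (Submonoid.subset_closure ⟨1, 2, by norm_num, by norm_num, by group⟩)

lemma qp_key2 : Quasipositive 4 ((band 4 1 3)⁻¹ * band 4 2 4 * band 4 1 4 * band 4 3 4) := by
  rw [quasipositive_def, key2]
  exact Submonoid.mul_mem _
    (Submonoid.subset_closure ⟨_, 3, by norm_num, by norm_num, rfl⟩)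
    (Submonoid.subset_closure ⟨_, 2, by norm_num, by norm_num, rfl⟩)

lemma qp_main (B : BraidGroup 4)
    (hB : Quasipositive 4 ((band 4 1 3)⁻¹ * band 4 2 4 * B * band 4 3 4))
    (β' β'' β''' : BraidGroup 4)
    (hβ' : Quasipositive 4 β') (hβ'' : Quasipositive 4 β'')
    (hβ''' : Quasipositive 4 β''') :
    Quasipositive 4 ((band 4 1 3)⁻¹ * band 4 2 4 * β' * B * β'' * band 4 3 4 * β''') := by
  set a := (band 4 1 3)⁻¹ * band 4 2 4 with ha
  have e : (band 4 1 3)⁻¹ * band 4 2 4 * β' * B * β'' * band 4 3 4 * β''' =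
      (a * β' * a⁻¹) * (a * B * band 4 3 4) *
        ((band 4 3 4)⁻¹ * β'' * ((band 4 3 4)⁻¹)⁻¹) * β''' := by
    rw [ha]; group
  rw [e]
  have hB' : Quasipositive 4 (a * B * band 4 3 4) := by
    have : a * B * band 4 3 4 = (band 4 1 3)⁻¹ * band 4 2 4 * B * band 4 3 4 := by rw [ha]
    rw [this]; exact hB
  exact Submonoid.mul_mem _ (Submonoid.mul_mem _
    (Submonoid.mul_mem _ (qp_conj a hβ') hB') (qp_conj (band 4 3 4)⁻¹ hβ'')) hβ'''

end Aux

/-- In `B₄`, for strongly quasipositive `β', β'', β'''`, the braids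
`σ_{1,3}⁻¹ σ_{2,4} β' σ_{1,2} β'' σ_{3,4} β'''` and
`σ_{1,3}⁻¹ σ_{2,4} β' σ_{1,4} β'' σ_{3,4} β'''` are quasipositive. -/
theorem claim_obscase2 (β' β'' β''' : BraidGroup 4)
    (hβ' : StronglyQuasipositive 4 β') (hβ'' : StronglyQuasipositive 4 β'')
    (hβ''' : StronglyQuasipositive 4 β''') :
    Quasipositive 4
      ((band 4 1 3)⁻¹ * band 4 2 4 * β' * band 4 1 2 * β'' * band 4 3 4 * β''') ∧
    Quasipositive 4
      ((band 4 1 3)⁻¹ * band 4 2 4 * β' * band 4 1 4 * β'' * band 4 3 4 * β''') := by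
  exact ⟨qp_main _ qp_key1 _ _ _ (sqp_qp hβ') (sqp_qp hβ'') (sqp_qp hβ'''),
    qp_main _ qp_key2 _ _ _ (sqp_qp hβ') (sqp_qp hβ'') (sqp_qp hβ''')⟩
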